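/- Let Ψ ∈ L^∞(M_n) and W an n×n matrix-valued weight with W(ζ) ≥ a²I a.e., where a > ||H_Ψ||_e. Let K be a closed subspace of H²(ℂ^n) on which ||H_Ψ f||_2 ≤ ||f||_W for all f ∈ K. If sup{ ||H_Ψ f||_2 : f ∈ K, ||f||_W = 1 } = 1, then there exists a nonzero f₀ ∈ K with ||H_Ψ f₀||_2 = ||f₀||_W. -/

import Mathlib

open MeasureTheory ComplexConjugate

noncomputable section

namespace MeroIdx

/-! Singular values and essential norm of operators between Hilbert spaces -/

variable {H K : Type*} [NormedAddCommGroup H] [InnerProductSpace ℂ H]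
  [NormedAddCommGroup K] [InnerProductSpace ℂ K]

/-- `sValue m T` is the `m`-th singular value of `T`, defined as the distance from `T`
to the operators of rank at most `m`. -/
def sValue (m : ℕ) (T : H →L[ℂ] K) : ℝ :=
  sInf { c : ℝ | ∃ R : H →L[ℂ] K, Module.rank ℂ ↥(LinearMap.range (R : H →ₗ[ℂ] K)) ≤ m ∧ c = ‖T - R‖ }

/-- The essential norm of `T` : the distance from `T` to the compact operators. -/
def essNorm (T : H →L[ℂ] K) : ℝ :=
  sInf { c : ℝ | ∃ S : H →L[ℂ] K, IsCompactOperator S ∧ c = ‖T - S‖ }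

/-! The circle, L², Hardy space -/

instance : Fact (0 < 2 * Real.pi) := ⟨by positivity⟩

abbrev circ : Type := AddCircle (2 * Real.pi)

/-- Normalized Lebesgue (Haar) measure on the circle. -/
def mu : Measure circ := @AddCircle.haarAddCircle (2 * Real.pi) _

instance : IsProbabilityMeasure mu := by unfold mu; infer_instance

abbrev L2 (m : ℕ) := Lp (EuclideanSpace ℂ (Fin m)) 2 mu

/-- The function `ζ ↦ ζ` on the circle (i.e. `t ↦ exp (i t)`). -/
def expmap : circ → ℂ := fun t => fourier 1 t

/-- The element `z^k ⬝ e_i` of `L²(ℂ^m)`. -/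
def fvec (m : ℕ) (k : ℤ) (i : Fin m) : L2 m :=
  ContinuousMap.toLp 2 mu ℂ
    ⟨fun t => (fourier k t : ℂ) • (EuclideanSpace.single i (1 : ℂ)),
      ((fourier k).continuous).smul continuous_const⟩

/-- The span of the negative-frequency basis vectors. -/
def negSpan (m : ℕ) : Submodule ℂ (L2 m) :=
  Submodule.span ℂ { f | ∃ k : ℤ, k < 0 ∧ ∃ i : Fin m, f = fvec m k i }

/-- The Hardy space `H²(ℂ^m)`: the orthogonal complement of the negative frequencies,
i.e. the functions in `L²` whose negative Fourier coefficients vanish. -/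
def Hardy (m : ℕ) : Submodule ℂ (L2 m) := (negSpan m)ᗮ

instance (m : ℕ) : CompleteSpace ↥(Hardy m) :=
  (Submodule.isClosed_orthogonal _).completeSpace_coe

/-- Orthogonal projection onto the Hardy space. -/
def Pplus (m : ℕ) : L2 m →L[ℂ] ↥(Hardy m) := (Hardy m).orthogonalProjection

/-- `P₊` as an endomorphism of `L²`. -/
def PplusL (m : ℕ) : L2 m →L[ℂ] L2 m := (Hardy m).subtypeL.comp (Pplus m)

/-- `P₋ = I - P₊`, the orthogonal projection onto `H²₋(ℂ^m) = L² ⊖ H²`. -/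
def PminusL (m : ℕ) : L2 m →L[ℂ] L2 m := ContinuousLinearMap.id ℂ (L2 m) - PplusL m

/-! Matrix symbols, multiplication operators, Hankel and Toeplitz operators -/

/-- The continuous linear map `ℂ^n → ℂ^m` given by a matrix. -/
def matCLM {m n : ℕ} (A : Matrix (Fin m) (Fin n) ℂ) :
    EuclideanSpace ℂ (Fin n) →L[ℂ] EuclideanSpace ℂ (Fin m) :=
  LinearMap.toContinuousLinearMap (Matrix.toEuclideanLin A)

/-- The operator norm of a matrix (as an operator `ℓ²(n) → ℓ²(m)`). -/
def matOpNorm {m n : ℕ} (A : Matrix (Fin m) (Fin n) ℂ) : ℝ := ‖matCLM A‖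

/-- The `j`-th singular value of a matrix. -/
def matSV {m n : ℕ} (j : ℕ) (A : Matrix (Fin m) (Fin n) ℂ) : ℝ := sValue j (matCLM A)

/-- Essential supremum of a (nonnegative) real function on the circle. -/
def essSupR (g : circ → ℝ) : ℝ := (essSup (fun t => ENNReal.ofReal (g t)) mu).toReal

/-- The `L^∞(M_{m,n})`-norm: essential supremum of the pointwise operator norm. -/
def linfNorm {m n : ℕ} (Φ : circ → Matrix (Fin m) (Fin n) ℂ) : ℝ :=
  essSupR fun t => matOpNorm (Φ t)

/-- `M` is the operator of multiplication by the matrix function `Φ` on `L²`. -/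
def IsMulOp {m n : ℕ} (Φ : circ → Matrix (Fin m) (Fin n) ℂ) (M : L2 n →L[ℂ] L2 m) : Prop :=
  ∀ f : L2 n, (M f : circ → EuclideanSpace ℂ (Fin m))
      =ᵐ[mu] fun t => Matrix.toEuclideanLin (Φ t) (f t)

/-- The Hankel operator `H_Φ = P₋ M_Φ : H²(ℂ^n) → H²₋(ℂ^m) ⊆ L²(ℂ^m)`,
presented in terms of the multiplication operator `M = M_Φ`. -/
def Hankel {m n : ℕ} (M : L2 n →L[ℂ] L2 m) : ↥(Hardy n) →L[ℂ] L2 m :=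
  (PminusL m).comp (M.comp (Hardy n).subtypeL)

/-- The Toeplitz operator `T_Φ = P₊ M_Φ : H²(ℂ^n) → H²(ℂ^m)`. -/
def Toeplitz {m n : ℕ} (M : L2 n →L[ℂ] L2 m) : ↥(Hardy n) →L[ℂ] ↥(Hardy m) :=
  (Pplus m).comp (M.comp (Hardy n).subtypeL)

/-! Blaschke–Potapov products and the class `H^∞_{(k)}` -/

/-- An elementary Blaschke–Potapov factor. -/
def bpFactor {n : ℕ} (l : ℂ) (P : Matrix (Fin n) (Fin n) ℂ) (z : ℂ) :
    Matrix (Fin n) (Fin n) ℂ :=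
  ((z - l) / (1 - (starRingEnd ℂ) l * z)) • P + (1 - P)

/-- `B` (as a function on the circle) is the boundary-value function of a finite
Blaschke–Potapov product of degree `k`. -/
def IsBPProd (n k : ℕ) (B : circ → Matrix (Fin n) (Fin n) ℂ) : Prop :=
  ∃ (r : ℕ) (U : Matrix (Fin n) (Fin n) ℂ) (l : Fin r → ℂ)
    (P : Fin r → Matrix (Fin n) (Fin n) ℂ),
    U ∈ Matrix.unitaryGroup (Fin n) ℂ ∧ (∀ j, ‖l j‖ < 1) ∧
    (∀ j, IsSelfAdjoint (P j) ∧ P j * P j = P j) ∧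
    (∑ j, (P j).rank) = k ∧
    ∀ t, B t = U * (List.ofFn fun j => bpFactor (l j) (P j) (expmap t)).prod

/-- `Q ∈ H^∞_{(k)}(M_{m,n})`: there is a Blaschke–Potapov product `B` of degree `k`
such that `QB ∈ H^∞`, i.e. multiplication by `QB` maps `H²(ℂ^n)` into `H²(ℂ^m)`. -/
def HkClass {m n : ℕ} (k : ℕ) (Q : circ → Matrix (Fin m) (Fin n) ℂ) : Prop :=
  ∃ (B : circ → Matrix (Fin n) (Fin n) ℂ) (M : L2 n →L[ℂ] L2 m),
    IsBPProd n k B ∧ IsMulOp (fun t => Q t * B t) M ∧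
    ∀ f : L2 n, f ∈ Hardy n → M f ∈ Hardy m

/-- The nested sets `Ω_j^{(k)}(Φ)` from superoptimal approximation:
`Ω_0` consists of the best approximants from `H^∞_{(k)}` in the `L^∞` norm and
`Ω_{j+1}` consists of those elements of `Ω_j` minimizing `ess sup s_{j+1}(Φ - Q)`. -/
def Omega {m n : ℕ} (k : ℕ) (Φ : circ → Matrix (Fin m) (Fin n) ℂ) :
    ℕ → Set (circ → Matrix (Fin m) (Fin n) ℂ)
  | 0 => { Q | HkClass k Q ∧ ∀ Q', HkClass k Q' →
      linfNorm (fun t => Φ t - Q t) ≤ linfNorm (fun t => Φ t - Q' t) }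
  | (j+1) => { Q | Q ∈ Omega k Φ j ∧ ∀ Q' ∈ Omega k Φ j,
      essSupR (fun t => matSV (j+1) (Φ t - Q t)) ≤ essSupR (fun t => matSV (j+1) (Φ t - Q' t)) }

/-- The superoptimal singular values `t_j^{(k)}(Φ)` of degree `k`. -/
def tSV {m n : ℕ} (k : ℕ) (Φ : circ → Matrix (Fin m) (Fin n) ℂ) (j : ℕ) : ℝ :=
  sInf { v : ℝ | ∃ Q ∈ Omega k Φ j, v = essSupR fun t => matSV j (Φ t - Q t) }

/-- `Φ` is `k`-admissible: `s_k(H_Φ) < s_{k-1}(H_Φ)` and the essential norm of `H_Φ`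
is less than every nonzero superoptimal singular value of degree `k` of `Φ`. -/
def kAdmissible {n : ℕ} (k : ℕ) (Φ : circ → Matrix (Fin n) (Fin n) ℂ)
    (MΦ : L2 n →L[ℂ] L2 n) : Prop :=
  IsMulOp Φ MΦ ∧ sValue k (Hankel MΦ) < sValue (k-1) (Hankel MΦ) ∧
  ∀ j : ℕ, tSV k Φ j ≠ 0 → essNorm (Hankel MΦ) < tSV k Φ j

/-- The squared weighted norm `‖f‖²_W = ∫ (W(ζ) f(ζ), f(ζ)) dm(ζ)` for a matrix weight. -/
def wNormSq {n : ℕ} (W : circ → Matrix (Fin n) (Fin n) ℂ) (f : L2 n) : ℝ :=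
  ∫ t, (inner ℂ (Matrix.toEuclideanLin (W t) (f t)) (f t) : ℂ).re ∂mu

/-- `J` is the flip operator `(Jf)(ζ) = conj ζ • conj (f ζ)` on `L²(ℂ^m)`. -/
def IsFlip (m : ℕ) (J : L2 m → L2 m) : Prop :=
  ∀ f : L2 m, (J f : circ → EuclideanSpace ℂ (Fin m)) =ᵐ[mu]
    fun t => (starRingEnd ℂ) (expmap t) •
      (WithLp.toLp 2 (fun i => (starRingEnd ℂ) (f t i)) : EuclideanSpace ℂ (Fin m))

/-- `Φ ∈ L^∞(M_{m,n})`: measurable and essentially bounded. -/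
def MemLinf {m n : ℕ} (Φ : circ → Matrix (Fin m) (Fin n) ℂ) : Prop :=
  AEStronglyMeasurable Φ mu ∧
    essSup (fun t => ENNReal.ofReal (matOpNorm (Φ t))) mu < ⊤
-- aux lemmas, stage 1: measurability & integrability for the weighted form
variable {n : ℕ}

/-- `matCLM` as a linear map in the matrix argument. -/
def matCLMl (n : ℕ) : Matrix (Fin n) (Fin n) ℂ →ₗ[ℂ]
    (EuclideanSpace ℂ (Fin n) →L[ℂ] EuclideanSpace ℂ (Fin n)) where
  toFun A := matCLM A
  map_add' A B := by ext v; simp [matCLM]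
  map_smul' c A := by ext v; simp [matCLM]

lemma continuous_matCLMl : Continuous (matCLMl n) :=
  LinearMap.continuous_of_finiteDimensional _

lemma aesm_apply (W : circ → Matrix (Fin n) (Fin n) ℂ) (hWm : AEStronglyMeasurable W mu)
    (f : L2 n) :
    AEStronglyMeasurable (fun t => (Matrix.toEuclideanLin (W t)) (f t)) mu := by
  have h1 : AEStronglyMeasurable (fun t => matCLMl n (W t)) mu :=
    continuous_matCLMl.comp_aestronglyMeasurable hWm
  have h2 := (h1.prodMk (MeasureTheory.Lp.aestronglyMeasurable f))
  have h3 : Continuous fun p : (EuclideanSpace ℂ (Fin n) →L[ℂ] EuclideanSpace ℂ (Fin n)) ×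
      EuclideanSpace ℂ (Fin n) => p.1 p.2 := isBoundedBilinearMap_apply.continuous
  exact h3.comp_aestronglyMeasurable h2

lemma memlinf_bound (W : circ → Matrix (Fin n) (Fin n) ℂ) (hWb : MemLinf W) :
    ∃ C : ℝ, 0 ≤ C ∧ ∀ᵐ t ∂mu, matOpNorm (W t) ≤ C := by
  refine ⟨(essSup (fun t => ENNReal.ofReal (matOpNorm (W t))) mu).toReal,
    ENNReal.toReal_nonneg, ?_⟩
  filter_upwards [ENNReal.ae_le_essSup (fun t => ENNReal.ofReal (matOpNorm (W t)))] with t ht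
  have h2 : (ENNReal.ofReal (matOpNorm (W t))).toReal ≤ _ :=
    ENNReal.toReal_mono hWb.2.ne ht
  have h0 : (0:ℝ) ≤ matOpNorm (W t) := norm_nonneg _
  calc matOpNorm (W t) = (ENNReal.ofReal (matOpNorm (W t))).toReal :=
        (ENNReal.toReal_ofReal h0).symm
    _ ≤ _ := h2

lemma norm_sq_integrable (f : L2 n) :
    MeasureTheory.Integrable (fun t => ‖f t‖ ^ 2) mu := by
  have h := (MeasureTheory.L2.integrable_inner (𝕜 := ℂ) f f).re
  refine h.congr (Filter.Eventually.of_forall fun t => ?_)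
  exact inner_self_eq_norm_sq (𝕜 := ℂ) (f t)

lemma integrable_wpair (W : circ → Matrix (Fin n) (Fin n) ℂ) (hWb : MemLinf W)
    (f g : L2 n) :
    MeasureTheory.Integrable
      (fun t => (inner ℂ ((Matrix.toEuclideanLin (W t)) (f t)) (g t) : ℂ)) mu := by
  obtain ⟨C, hC0, hC⟩ := memlinf_bound W hWb
  have hm : AEStronglyMeasurable
      (fun t => (inner ℂ ((Matrix.toEuclideanLin (W t)) (f t)) (g t) : ℂ)) mu :=
    (aesm_apply W hWb.1 f).inner (MeasureTheory.Lp.aestronglyMeasurable g)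
  have hint : MeasureTheory.Integrable (fun t => C * (‖f t‖ ^ 2 + ‖g t‖ ^ 2)) mu :=
    ((norm_sq_integrable f).add (norm_sq_integrable g)).const_mul C
  refine hint.mono' hm ?_
  filter_upwards [hC] with t ht
  have h1 : ‖(inner ℂ ((Matrix.toEuclideanLin (W t)) (f t)) (g t) : ℂ)‖ ≤
      ‖(Matrix.toEuclideanLin (W t)) (f t)‖ * ‖g t‖ := norm_inner_le_norm _ _
  have h2 : ‖(Matrix.toEuclideanLin (W t)) (f t)‖ ≤ matOpNorm (W t) * ‖f t‖ :=
    (matCLM (W t)).le_opNorm (f t)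
  have h3 : ‖f t‖ * ‖g t‖ ≤ ‖f t‖ ^ 2 + ‖g t‖ ^ 2 := by nlinarith [norm_nonneg (f t), norm_nonneg (g t), sq_nonneg (‖f t‖ - ‖g t‖)]
  calc ‖(inner ℂ ((Matrix.toEuclideanLin (W t)) (f t)) (g t) : ℂ)‖
      ≤ ‖(Matrix.toEuclideanLin (W t)) (f t)‖ * ‖g t‖ := h1
    _ ≤ (matOpNorm (W t) * ‖f t‖) * ‖g t‖ := by
        apply mul_le_mul_of_nonneg_right h2 (norm_nonneg _)
    _ ≤ C * (‖f t‖ * ‖g t‖) := by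
        rw [mul_assoc]
        exact mul_le_mul_of_nonneg_right ht (by positivity)
    _ ≤ C * (‖f t‖ ^ 2 + ‖g t‖ ^ 2) := mul_le_mul_of_nonneg_left h3 hC0

-- stage 2 : integral identities for wNormSq
lemma integral_norm_sq (f : L2 n) : ∫ t, ‖f t‖ ^ 2 ∂mu = ‖f‖ ^ 2 := by
  have h := MeasureTheory.L2.inner_def (𝕜 := ℂ) f f
  have h2 : ‖f‖ ^ 2 = RCLike.re (inner ℂ f f : ℂ) := (inner_self_eq_norm_sq (𝕜 := ℂ) f).symm
  rw [h2, h, ← integral_re (MeasureTheory.L2.integrable_inner (𝕜 := ℂ) f f)]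
  refine MeasureTheory.integral_congr_ae (Filter.Eventually.of_forall fun t => ?_)
  exact (inner_self_eq_norm_sq (𝕜 := ℂ) (f t)).symm

lemma wNormSq_le (W : circ → Matrix (Fin n) (Fin n) ℂ) (hWb : MemLinf W) :
    ∃ C : ℝ, 0 ≤ C ∧ ∀ f : L2 n, wNormSq W f ≤ C * ‖f‖ ^ 2 := by
  obtain ⟨C, hC0, hC⟩ := memlinf_bound W hWb
  refine ⟨C, hC0, fun f => ?_⟩
  have h1 : wNormSq W f ≤ ∫ t, C * ‖f t‖ ^ 2 ∂mu := by
    refine MeasureTheory.integral_mono_ae ((integrable_wpair W hWb f f).re)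
      ((norm_sq_integrable f).const_mul C) ?_
    filter_upwards [hC] with t ht
    have h2 : ((inner ℂ ((Matrix.toEuclideanLin (W t)) (f t)) (f t) : ℂ)).re ≤
        ‖(inner ℂ ((Matrix.toEuclideanLin (W t)) (f t)) (f t) : ℂ)‖ := Complex.re_le_norm _
    have h3 : ‖(inner ℂ ((Matrix.toEuclideanLin (W t)) (f t)) (f t) : ℂ)‖ ≤
        ‖(Matrix.toEuclideanLin (W t)) (f t)‖ * ‖f t‖ := norm_inner_le_norm _ _
    have h4 : ‖(Matrix.toEuclideanLin (W t)) (f t)‖ ≤ matOpNorm (W t) * ‖f t‖ :=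
      (matCLM (W t)).le_opNorm (f t)
    have h5 : (0:ℝ) ≤ ‖f t‖ := norm_nonneg _
    calc ((inner ℂ ((Matrix.toEuclideanLin (W t)) (f t)) (f t) : ℂ)).re
        ≤ ‖(Matrix.toEuclideanLin (W t)) (f t)‖ * ‖f t‖ := le_trans h2 h3
      _ ≤ (matOpNorm (W t) * ‖f t‖) * ‖f t‖ := mul_le_mul_of_nonneg_right h4 h5
      _ ≤ C * ‖f t‖ ^ 2 := by nlinarith
  rw [MeasureTheory.integral_const_mul, integral_norm_sq] at h1
  exact h1

lemma wNormSq_ge (W : circ → Matrix (Fin n) (Fin n) ℂ) (hWb : MemLinf W) (a : ℝ)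
    (hW : ∀ᵐ ζ ∂mu, ∀ ξ : EuclideanSpace ℂ (Fin n),
      a ^ 2 * ‖ξ‖ ^ 2 ≤ (inner ℂ (matCLM (W ζ) ξ) ξ : ℂ).re)
    (f : L2 n) : a ^ 2 * ‖f‖ ^ 2 ≤ wNormSq W f := by
  have h1 : ∫ t, a ^ 2 * ‖f t‖ ^ 2 ∂mu ≤ wNormSq W f := by
    refine MeasureTheory.integral_mono_ae ((norm_sq_integrable f).const_mul (a ^ 2))
      ((integrable_wpair W hWb f f).re) ?_
    filter_upwards [hW] with t ht
    exact ht (f t)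
  rw [MeasureTheory.integral_const_mul, integral_norm_sq] at h1
  exact h1

lemma wNormSq_expand (W : circ → Matrix (Fin n) (Fin n) ℂ) (hWb : MemLinf W) (f g : L2 n) :
    ∃ s : ℝ, ∀ c : ℝ, wNormSq W (f + (c:ℂ) • g) =
      wNormSq W f + c * s + c ^ 2 * wNormSq W g := by
  refine ⟨∫ t, ((inner ℂ ((Matrix.toEuclideanLin (W t)) (f t)) (g t) : ℂ).re +
      (inner ℂ ((Matrix.toEuclideanLin (W t)) (g t)) (f t) : ℂ).re) ∂mu, fun c => ?_⟩
  have hFf : MeasureTheory.Integrable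
      (fun t => (inner ℂ ((Matrix.toEuclideanLin (W t)) (f t)) (f t) : ℂ).re) mu :=
    (integrable_wpair W hWb f f).re
  have hFg : MeasureTheory.Integrable
      (fun t => (inner ℂ ((Matrix.toEuclideanLin (W t)) (g t)) (g t) : ℂ).re) mu :=
    (integrable_wpair W hWb g g).re
  have hX : MeasureTheory.Integrable
      (fun t => (inner ℂ ((Matrix.toEuclideanLin (W t)) (f t)) (g t) : ℂ).re +
        (inner ℂ ((Matrix.toEuclideanLin (W t)) (g t)) (f t) : ℂ).re) mu :=
    ((integrable_wpair W hWb f g).re).add ((integrable_wpair W hWb g f).re)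
  have key : wNormSq W (f + (c:ℂ) • g) = ∫ t,
      ((inner ℂ ((Matrix.toEuclideanLin (W t)) (f t)) (f t) : ℂ).re
      + (c * ((inner ℂ ((Matrix.toEuclideanLin (W t)) (f t)) (g t) : ℂ).re
            + (inner ℂ ((Matrix.toEuclideanLin (W t)) (g t)) (f t) : ℂ).re)
        + c ^ 2 * (inner ℂ ((Matrix.toEuclideanLin (W t)) (g t)) (g t) : ℂ).re)) ∂mu := by
    refine MeasureTheory.integral_congr_ae ?_
    filter_upwards [MeasureTheory.Lp.coeFn_add f ((c:ℂ) • g),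
      MeasureTheory.Lp.coeFn_smul (c:ℂ) g] with t h1 h2
    have h3 : ((f + (c:ℂ) • g) : L2 n) t = f t + (c:ℂ) • (g t) := by
      rw [h1]; simp only [Pi.add_apply]; rw [h2]; simp
    rw [h3]
    have expand : (inner ℂ ((Matrix.toEuclideanLin (W t)) (f t + (c:ℂ) • g t))
          (f t + (c:ℂ) • g t) : ℂ)
        = (inner ℂ ((Matrix.toEuclideanLin (W t)) (f t)) (f t) : ℂ)
          + ((c:ℂ) * ((inner ℂ ((Matrix.toEuclideanLin (W t)) (f t)) (g t) : ℂ)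
            + (inner ℂ ((Matrix.toEuclideanLin (W t)) (g t)) (f t) : ℂ))
          + (c:ℂ) * ((c:ℂ) * (inner ℂ ((Matrix.toEuclideanLin (W t)) (g t)) (g t) : ℂ))) := by
      simp only [_root_.map_add, LinearMap.map_smul, inner_add_left, inner_add_right,
        inner_smul_left, inner_smul_right, Complex.conj_ofReal, smul_eq_mul]
      ring
    rw [expand]
    simp only [Complex.add_re, Complex.re_ofReal_mul]
    ring
  have hB : MeasureTheory.Integrable
      (fun t => c * ((inner ℂ ((Matrix.toEuclideanLin (W t)) (f t)) (g t) : ℂ).re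
            + (inner ℂ ((Matrix.toEuclideanLin (W t)) (g t)) (f t) : ℂ).re)
        + c ^ 2 * (inner ℂ ((Matrix.toEuclideanLin (W t)) (g t)) (g t) : ℂ).re) mu :=
    (hX.const_mul c).add (hFg.const_mul (c ^ 2))
  rw [key, MeasureTheory.integral_add hFf hB,
    MeasureTheory.integral_add (hX.const_mul c) (hFg.const_mul (c ^ 2)),
    MeasureTheory.integral_const_mul, MeasureTheory.integral_const_mul]
  unfold wNormSq
  ring
-- stage 3 : consequences of the expansion
lemma sqrt_four_mul (x y : ℝ) (hx : 0 ≤ x) (hy : 0 ≤ y) :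
    Real.sqrt (4 * x * y) = 2 * Real.sqrt x * Real.sqrt y := by
  rw [show 4 * x * y = (2 * Real.sqrt x * Real.sqrt y) ^ 2 by
    rw [mul_pow, mul_pow, Real.sq_sqrt hx, Real.sq_sqrt hy]; ring]
  exact Real.sqrt_sq (by positivity)

lemma wq_abs_s (W : circ → Matrix (Fin n) (Fin n) ℂ)
    (hnn : ∀ h : L2 n, 0 ≤ wNormSq W h) (f g : L2 n) {s : ℝ}
    (hs : ∀ c : ℝ, wNormSq W (f + (c:ℂ) • g) =
      wNormSq W f + c * s + c ^ 2 * wNormSq W g) :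
    |s| ≤ 2 * Real.sqrt (wNormSq W f) * Real.sqrt (wNormSq W g) := by
  have hd : discrim (wNormSq W g) s (wNormSq W f) ≤ 0 := by
    refine discrim_le_zero fun x => ?_
    have h1 := hs x
    have h2 := hnn (f + (x:ℂ) • g)
    nlinarith [h1, h2]
  rw [discrim] at hd
  have h3 : s ^ 2 ≤ 4 * wNormSq W f * wNormSq W g := by nlinarith
  have h4 : |s| = Real.sqrt (s ^ 2) := (Real.sqrt_sq_eq_abs s).symm
  rw [h4, ← sqrt_four_mul _ _ (hnn f) (hnn g)]
  exact Real.sqrt_le_sqrt h3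

lemma wq_cont (W : circ → Matrix (Fin n) (Fin n) ℂ) (hWb : MemLinf W)
    (hnn : ∀ h : L2 n, 0 ≤ wNormSq W h) (f g : L2 n) :
    |wNormSq W f - wNormSq W g| ≤
      2 * Real.sqrt (wNormSq W g) * Real.sqrt (wNormSq W (f - g)) + wNormSq W (f - g) := by
  obtain ⟨s, hs⟩ := wNormSq_expand W hWb g (f - g)
  have h1 := hs 1
  rw [show g + ((1:ℝ):ℂ) • (f - g) = f by push_cast; rw [one_smul]; abel] at h1
  have h2 : |s| ≤ 2 * Real.sqrt (wNormSq W g) * Real.sqrt (wNormSq W (f - g)) :=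
    wq_abs_s W hnn g (f - g) hs
  have h3 : wNormSq W f - wNormSq W g = s + wNormSq W (f - g) := by rw [h1]; ring
  rw [h3]
  calc |s + wNormSq W (f - g)| ≤ |s| + |wNormSq W (f - g)| := abs_add_le _ _
    _ = |s| + wNormSq W (f - g) := by rw [abs_of_nonneg (hnn _)]
    _ ≤ _ := by linarith

lemma wq_parallelogram (W : circ → Matrix (Fin n) (Fin n) ℂ) (hWb : MemLinf W)
    (f g : L2 n) :
    wNormSq W (f + g) + wNormSq W (f - g) = 2 * wNormSq W f + 2 * wNormSq W g := by
  obtain ⟨s, hs⟩ := wNormSq_expand W hWb f g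
  have h1 := hs 1
  have h2 := hs (-1)
  rw [show ((1:ℝ):ℂ) • g = g by push_cast; rw [one_smul]] at h1
  rw [show f + ((-1:ℝ):ℂ) • g = f - g by push_cast; rw [neg_one_smul]; abel] at h2
  rw [h1, h2]; ring
-- stage 4 : essential norm facts
lemma essNorm_nonneg {E F : Type*} [NormedAddCommGroup E] [InnerProductSpace ℂ E]
    [NormedAddCommGroup F] [InnerProductSpace ℂ F] (T : E →L[ℂ] F) : 0 ≤ essNorm T :=
  Real.sInf_nonneg fun _ hc => by obtain ⟨S, _, rfl⟩ := hc; exact norm_nonneg _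

lemma exists_compact_approx {E F : Type*} [NormedAddCommGroup E] [InnerProductSpace ℂ E]
    [NormedAddCommGroup F] [InnerProductSpace ℂ F] {T : E →L[ℂ] F} {a : ℝ}
    (h : essNorm T < a) :
    ∃ S : E →L[ℂ] F, IsCompactOperator S ∧ ‖T - S‖ < a := by
  have hz : IsCompactOperator ((0 : E →L[ℂ] F) : E → F) := isCompactOperator_zero
  have hne : Set.Nonempty {c : ℝ | ∃ S : E →L[ℂ] F, IsCompactOperator S ∧ c = ‖T - S‖} :=
    ⟨‖T - 0‖, 0, hz, rfl⟩
  have h' : sInf {c : ℝ | ∃ S : E →L[ℂ] F, IsCompactOperator S ∧ c = ‖T - S‖} < a := h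
  obtain ⟨c, hc, hclt⟩ := exists_lt_of_csInf_lt hne h'
  obtain ⟨S, hS, rfl⟩ := hc
  exact ⟨S, hS, hclt⟩
-- stage 5 : abstract versions
section Abstract

variable {E F : Type*} [NormedAddCommGroup E] [InnerProductSpace ℂ E]
  [NormedAddCommGroup F] [InnerProductSpace ℂ F]

lemma q_abs_s (q : E → ℝ) (hnn : ∀ h, 0 ≤ q h) {f g : E} {s : ℝ}
    (hs : ∀ c : ℝ, q (f + (c:ℂ) • g) = q f + c * s + c ^ 2 * q g) :
    |s| ≤ 2 * Real.sqrt (q f) * Real.sqrt (q g) := by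
  have hd : discrim (q g) s (q f) ≤ 0 := by
    refine discrim_le_zero fun x => ?_
    have h1 := hs x
    have h2 := hnn (f + (x:ℂ) • g)
    nlinarith [h1, h2]
  rw [discrim] at hd
  have h3 : s ^ 2 ≤ 4 * q f * q g := by nlinarith
  have h4 : |s| = Real.sqrt (s ^ 2) := (Real.sqrt_sq_eq_abs s).symm
  rw [h4, ← sqrt_four_mul _ _ (hnn f) (hnn g)]
  exact Real.sqrt_le_sqrt h3

lemma q_cont (q : E → ℝ) (hnn : ∀ h, 0 ≤ q h)
    (hexp : ∀ f g : E, ∃ s : ℝ, ∀ c : ℝ,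
      q (f + (c:ℂ) • g) = q f + c * s + c ^ 2 * q g) (f g : E) :
    |q f - q g| ≤ 2 * Real.sqrt (q g) * Real.sqrt (q (f - g)) + q (f - g) := by
  obtain ⟨s, hs⟩ := hexp g (f - g)
  have h1 := hs 1
  rw [show g + ((1:ℝ):ℂ) • (f - g) = f by push_cast; rw [one_smul]; abel] at h1
  have h2 : |s| ≤ 2 * Real.sqrt (q g) * Real.sqrt (q (f - g)) := q_abs_s q hnn hs
  have h3 : q f - q g = s + q (f - g) := by rw [h1]; ring
  rw [h3]
  calc |s + q (f - g)| ≤ |s| + |q (f - g)| := abs_add_le _ _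
    _ = |s| + q (f - g) := by rw [abs_of_nonneg (hnn _)]
    _ ≤ _ := by linarith

lemma q_parallelogram (q : E → ℝ)
    (hexp : ∀ f g : E, ∃ s : ℝ, ∀ c : ℝ,
      q (f + (c:ℂ) • g) = q f + c * s + c ^ 2 * q g) (f g : E) :
    q (f + g) + q (f - g) = 2 * q f + 2 * q g := by
  obtain ⟨s, hs⟩ := hexp f g
  have h1 := hs 1
  have h2 := hs (-1)
  rw [show ((1:ℝ):ℂ) • g = g by push_cast; rw [one_smul]] at h1
  rw [show f + ((-1:ℝ):ℂ) • g = f - g by push_cast; rw [neg_one_smul]; abel] at h2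
  rw [h1, h2]; ring

set_option maxHeartbeats 1000000 in
/-- Abstract norm-attainment lemma. -/
lemma abstract_maximizer [CompleteSpace E]
    (T S : E →L[ℂ] F) (hS : IsCompactOperator S)
    (q : E → ℝ) (a C : ℝ) (ha0 : 0 < a) (hC0 : 0 ≤ C)
    (hSlt : ‖T - S‖ < a)
    (hqlow : ∀ f, a ^ 2 * ‖f‖ ^ 2 ≤ q f) (hqup : ∀ f, q f ≤ C * ‖f‖ ^ 2)
    (hexp : ∀ f g : E, ∃ s : ℝ, ∀ c : ℝ,
      q (f + (c:ℂ) • g) = q f + c * s + c ^ 2 * q g)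
    (K : Submodule ℂ E) (hK : IsClosed (K : Set E))
    (hbound : ∀ f ∈ K, ‖T f‖ ≤ Real.sqrt (q f))
    (hsup : sSup { v : ℝ | ∃ f ∈ K, Real.sqrt (q f) = 1 ∧ v = ‖T f‖ } = 1) :
    ∃ f₀ ∈ K, f₀ ≠ 0 ∧ ‖T f₀‖ = Real.sqrt (q f₀) := by
  classical
  have qnn : ∀ h : E, 0 ≤ q h := fun h => le_trans (by positivity) (hqlow h)
  set ρ := ‖T - S‖ with hρdef
  have hρ0 : 0 ≤ ρ := norm_nonneg _
  set r := ρ / a with hrdef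
  have hr0 : 0 ≤ r := div_nonneg hρ0 ha0.le
  have hr1 : r < 1 := (div_lt_one ha0).2 hSlt
  set Qb := Real.sqrt C * (2 / a) with hQbdef
  have hQb0 : 0 ≤ Qb := by positivity
  have hasqrt : ∀ h : E, a * ‖h‖ ≤ Real.sqrt (q h) := by
    intro h
    have h1 := hqlow h
    have h2 : a * ‖h‖ = Real.sqrt (a ^ 2 * ‖h‖ ^ 2) := by
      rw [Real.sqrt_mul (sq_nonneg a), Real.sqrt_sq ha0.le, Real.sqrt_sq (norm_nonneg _)]
    rw [h2]
    exact Real.sqrt_le_sqrt h1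
  have hsqrtC : ∀ h : E, Real.sqrt (q h) ≤ Real.sqrt C * ‖h‖ := by
    intro h
    have h1 := hqup h
    have h2 : Real.sqrt C * ‖h‖ = Real.sqrt (C * ‖h‖ ^ 2) := by
      rw [Real.sqrt_mul hC0, Real.sqrt_sq (norm_nonneg _)]
    rw [h2]
    exact Real.sqrt_le_sqrt h1
  -- maximizing sequence
  have hVne : { v : ℝ | ∃ f ∈ K, Real.sqrt (q f) = 1 ∧ v = ‖T f‖ }.Nonempty := by
    by_contra hc
    rw [Set.not_nonempty_iff_eq_empty.1 hc, Real.sSup_empty] at hsup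
    norm_num at hsup
  have hFex : ∀ k : ℕ, ∃ f : E, f ∈ K ∧ Real.sqrt (q f) = 1 ∧
      1 - 1 / ((k : ℝ) + 1) < ‖T f‖ := by
    intro k
    have hpos : (0:ℝ) < 1 / ((k : ℝ) + 1) := by positivity
    have hlt : 1 - 1 / ((k : ℝ) + 1) <
        sSup { v : ℝ | ∃ f ∈ K, Real.sqrt (q f) = 1 ∧ v = ‖T f‖ } := by
      rw [hsup]; linarith
    obtain ⟨v, hv, hvlt⟩ := exists_lt_of_lt_csSup hVne hlt
    obtain ⟨f, hfK, hfq, hveq⟩ := hv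
    exact ⟨f, hfK, hfq, by rwa [hveq] at hvlt⟩
  choose F hFK hFq hFlt using hFex
  have hq1 : ∀ k, q (F k) = 1 := by
    intro k
    have h1 := hFq k
    rw [← Real.sq_sqrt (qnn (F k)), h1]
    norm_num
  have hH1 : ∀ k, ‖T (F k)‖ ≤ 1 := by
    intro k
    have := hbound (F k) (hFK k)
    rwa [hFq k] at this
  have hnF : ∀ k, ‖F k‖ ≤ 1 / a := by
    intro k
    have h1 := hasqrt (F k)
    rw [hFq k] at h1
    rw [le_div_iff₀ ha0]
    linarith [mul_comm a ‖F k‖]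
  -- compact extraction
  have hball : ∀ k, F k ∈ Metric.closedBall (0 : E) (1 / a) := by
    intro k
    rw [Metric.mem_closedBall, dist_zero_right]
    exact hnF k
  obtain ⟨Kc, hKc, hKim⟩ := hS.image_closedBall_subset_compact (𝕜₁ := ℂ) (1 / a)
  obtain ⟨y0, hy0, φ, hφ, hφtend⟩ :=
    hKc.tendsto_subseq (x := fun k => S (F k)) (fun k => hKim ⟨F k, hball k, rfl⟩)
  have hSC : CauchySeq fun k => S (F (φ k)) := hφtend.cauchySeq
  set G : ℕ → E := fun k => F (φ k) with hGdef
  have hGK : ∀ k, G k ∈ K := fun k => hFK (φ k)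
  have hGq : ∀ k, q (G k) = 1 := fun k => hq1 (φ k)
  have hGn : ∀ k, ‖G k‖ ≤ 1 / a := fun k => hnF (φ k)
  have hGH1 : ∀ k, ‖T (G k)‖ ≤ 1 := fun k => hH1 (φ k)
  have hGHlt : ∀ k : ℕ, 1 - 1 / ((k : ℝ) + 1) < ‖T (G k)‖ := by
    intro k
    have h1 := hFlt (φ k)
    have h2 : 1 - 1 / ((k : ℝ) + 1) ≤ 1 - 1 / ((φ k : ℝ) + 1) := by
      have h3 : (k : ℝ) + 1 ≤ (φ k : ℝ) + 1 := by
        have h4 : (k : ℝ) ≤ (φ k : ℝ) := Nat.cast_le.2 hφ.le_apply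
        linarith
      have h4 : (0:ℝ) < (k : ℝ) + 1 := by positivity
      have := one_div_le_one_div_of_le h4 h3
      linarith
    exact lt_of_le_of_lt h2 h1
  -- the key estimate
  have hkey : ∀ m k : ℕ,
      (1 - r ^ 2) * q (G m - G k) ≤
        (4 - 2 * ‖T (G m)‖ ^ 2 - 2 * ‖T (G k)‖ ^ 2)
          + dist (S (G m)) (S (G k)) ^ 2
          + 2 * dist (S (G m)) (S (G k)) * r * Qb := by
    intro m k
    set u : E := G m - G k with hudef
    set w : E := G m + G k with hwdef
    set δ := dist (S (G m)) (S (G k)) with hδdef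
    have hδ0 : 0 ≤ δ := dist_nonneg
    have hpar := q_parallelogram q hexp (G m) (G k)
    rw [← hudef, ← hwdef, hGq m, hGq k] at hpar
    have hp2 := parallelogram_law_with_norm ℂ (T (G m)) (T (G k))
    rw [← map_add T, ← map_sub T, ← hwdef, ← hudef] at hp2
    have hb := hbound w (add_mem (hGK m) (hGK k))
    have hbsq : ‖T w‖ ^ 2 ≤ q w := by
      have h2 := pow_le_pow_left₀ (norm_nonneg _) hb 2
      rwa [Real.sq_sqrt (qnn _)] at h2
    have hHu : ‖T u‖ ≤ δ + r * Real.sqrt (q u) := by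
      have h1 : T u = S u + (T - S) u := by
        rw [ContinuousLinearMap.sub_apply]; abel
      have h2 : ‖(T - S) u‖ ≤ ρ * ‖u‖ := (T - S).le_opNorm u
      have h3 : ‖S u‖ = δ := by
        rw [hδdef, dist_eq_norm, ← map_sub S, ← hudef]
      have h4 : ρ * ‖u‖ ≤ r * Real.sqrt (q u) := by
        have h5 : a * ‖u‖ ≤ Real.sqrt (q u) := hasqrt _
        have h6 : ρ * ‖u‖ = r * (a * ‖u‖) := by
          rw [hrdef]
          field_simp
        rw [h6]
        exact mul_le_mul_of_nonneg_left h5 hr0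
      calc ‖T u‖ = ‖S u + (T - S) u‖ := by rw [← h1]
        _ ≤ ‖S u‖ + ‖(T - S) u‖ := norm_add_le _ _
        _ ≤ δ + r * Real.sqrt (q u) := by
            rw [h3]; exact add_le_add le_rfl (le_trans h2 h4)
    have hQ : Real.sqrt (q u) ≤ Qb := by
      have h1 := hsqrtC u
      have h3 : ‖u‖ ≤ 2 / a := by
        calc ‖u‖ ≤ ‖G m‖ + ‖G k‖ := norm_sub_le _ _
          _ ≤ 1 / a + 1 / a := add_le_add (hGn m) (hGn k)
          _ = 2 / a := by ring
      calc Real.sqrt (q u) ≤ Real.sqrt C * ‖u‖ := h1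
        _ ≤ Real.sqrt C * (2 / a) :=
            mul_le_mul_of_nonneg_left h3 (Real.sqrt_nonneg C)
        _ = Qb := rfl
    have hsu := Real.sq_sqrt (qnn u)
    have hsu0 := Real.sqrt_nonneg (q u)
    have hHu0 : (0:ℝ) ≤ ‖T u‖ := norm_nonneg _
    have hHw0 : (0:ℝ) ≤ ‖T w‖ := norm_nonneg _
    nlinarith [hpar, hp2, hbsq, hHu, hQ, hsu, hsu0, hHu0, hHw0, hδ0, hr0, hQb0,
      mul_le_mul_of_nonneg_left hQ (mul_nonneg (mul_nonneg (by norm_num : (0:ℝ) ≤ 2) hδ0) hr0),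
      sq_nonneg (‖T u‖ - (δ + r * Real.sqrt (q u)))]
  -- G is Cauchy
  have h1r : 0 < 1 - r ^ 2 := by nlinarith
  have hGC : CauchySeq G := by
    rw [Metric.cauchySeq_iff]
    intro ε hε
    set Tc := (1 - r ^ 2) * (a ^ 2 * ε ^ 2) with hTdef
    have hT0 : 0 < Tc := by positivity
    obtain ⟨N₁, hN₁⟩ := exists_nat_gt (32 / Tc)
    set δ₀ := min 1 (Tc / (4 * (1 + 2 * r * Qb))) with hδ₀def
    have hδ₀pos : 0 < δ₀ := lt_min one_pos (by positivity)
    obtain ⟨N₂, hN₂⟩ := Metric.cauchySeq_iff.1 hSC δ₀ hδ₀pos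
    refine ⟨max N₁ N₂, fun m hm k hk => ?_⟩
    have hmN₁ : N₁ ≤ m := le_trans (le_max_left _ _) hm
    have hkN₁ : N₁ ≤ k := le_trans (le_max_left _ _) hk
    have hδlt : dist (S (G m)) (S (G k)) < δ₀ :=
      hN₂ m (le_trans (le_max_right _ _) hm) k (le_trans (le_max_right _ _) hk)
    set β := 1 / ((N₁ : ℝ) + 1) with hβdef
    have hβ0 : 0 < β := by positivity
    have hβ1 : β ≤ 1 := by
      rw [hβdef, div_le_one (by positivity)]
      linarith [Nat.cast_nonneg (α := ℝ) N₁]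
    have h32 : 32 < (N₁ : ℝ) * Tc := by
      have := (div_lt_iff₀ hT0).1 hN₁
      linarith
    have h8β : 8 * β < Tc / 4 := by
      have hpos : (0:ℝ) < (N₁:ℝ) + 1 := by positivity
      rw [hβdef, show (8:ℝ) * (1 / ((N₁:ℝ) + 1)) = 8 / ((N₁:ℝ) + 1) by ring,
        div_lt_div_iff₀ hpos (by norm_num : (0:ℝ) < 4)]
      nlinarith [hT0, h32]
    have hem : 1 - β ≤ ‖T (G m)‖ := by
      have h1 := hGHlt m
      have h2 : 1 / ((m : ℝ) + 1) ≤ β := by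
        rw [hβdef]
        apply one_div_le_one_div_of_le (by positivity)
        have : (N₁ : ℝ) ≤ (m : ℝ) := Nat.cast_le.2 hmN₁
        linarith
      linarith
    have hek : 1 - β ≤ ‖T (G k)‖ := by
      have h1 := hGHlt k
      have h2 : 1 / ((k : ℝ) + 1) ≤ β := by
        rw [hβdef]
        apply one_div_le_one_div_of_le (by positivity)
        have : (N₁ : ℝ) ≤ (k : ℝ) := Nat.cast_le.2 hkN₁
        linarith
      linarith
    have hemle := hGH1 m
    have hekle := hGH1 k
    have h1 := hkey m k
    set δ := dist (S (G m)) (S (G k)) with hδdef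
    have hδ0 : 0 ≤ δ := dist_nonneg
    have hδ1 : δ < 1 := lt_of_lt_of_le hδlt (min_le_left _ _)
    have hδT : δ * (1 + 2 * r * Qb) < Tc / 4 := by
      have h2 : δ₀ ≤ Tc / (4 * (1 + 2 * r * Qb)) := min_le_right _ _
      have h3 : δ < Tc / (4 * (1 + 2 * r * Qb)) := lt_of_lt_of_le hδlt h2
      have h4 : (0:ℝ) < 1 + 2 * r * Qb := by positivity
      calc δ * (1 + 2 * r * Qb) < Tc / (4 * (1 + 2 * r * Qb)) * (1 + 2 * r * Qb) :=
            mul_lt_mul_of_pos_right h3 h4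
        _ = Tc / 4 := by field_simp
    have hqu_lt : q (G m - G k) < a ^ 2 * ε ^ 2 := by
      have h5 : 4 - 2 * ‖T (G m)‖ ^ 2 - 2 * ‖T (G k)‖ ^ 2 ≤ 8 * β := by
        nlinarith [hem, hek, hemle, hekle, hβ0, hβ1]
      have h6 : δ ^ 2 + 2 * δ * r * Qb ≤ δ * (1 + 2 * r * Qb) := by nlinarith
      have h7 : (1 - r ^ 2) * q (G m - G k) < Tc / 2 := by
        calc (1 - r ^ 2) * q (G m - G k)
            ≤ (4 - 2 * ‖T (G m)‖ ^ 2 - 2 * ‖T (G k)‖ ^ 2) + δ ^ 2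
                + 2 * δ * r * Qb := h1
          _ ≤ 8 * β + δ * (1 + 2 * r * Qb) := by linarith
          _ < Tc / 4 + Tc / 4 := by linarith
          _ = Tc / 2 := by ring
      rw [hTdef] at h7
      nlinarith [qnn (G m - G k), h7, h1r, hT0]
    have h8 : a ^ 2 * ‖G m - G k‖ ^ 2 ≤ q (G m - G k) := hqlow _
    rw [dist_eq_norm]
    have h11 : ‖G m - G k‖ ^ 2 < ε ^ 2 := by nlinarith [sq_nonneg a, ha0]
    nlinarith [norm_nonneg (G m - G k), hε]
  -- pass to the limit
  obtain ⟨f₀, hf₀⟩ := cauchySeq_tendsto_of_complete hGC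
  have hf₀K : f₀ ∈ K := hK.mem_of_tendsto hf₀ (Filter.Eventually.of_forall fun k => hGK k)
  have hnorm_tendsto : Filter.Tendsto (fun k => ‖T (G k)‖) Filter.atTop (nhds ‖T f₀‖) :=
    ((T.continuous.tendsto f₀).comp hf₀).norm
  have hlow : Filter.Tendsto (fun k : ℕ => 1 - 1 / ((k : ℝ) + 1)) Filter.atTop (nhds 1) := by
    have h1 := tendsto_one_div_add_atTop_nhds_zero_nat (𝕜 := ℝ)
    have h2 := Filter.Tendsto.sub (tendsto_const_nhds (x := (1:ℝ)) (f := Filter.atTop)) h1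
    simpa using h2
  have h1lim : Filter.Tendsto (fun k => ‖T (G k)‖) Filter.atTop (nhds 1) :=
    tendsto_of_tendsto_of_tendsto_of_le_of_le hlow tendsto_const_nhds
      (fun k => (hGHlt k).le) fun k => hGH1 k
  have hHf₀ : ‖T f₀‖ = 1 := tendsto_nhds_unique hnorm_tendsto h1lim
  have hq₀ : q f₀ = 1 := by
    have hd : Filter.Tendsto (fun k => ‖G k - f₀‖) Filter.atTop (nhds 0) := by
      have h2 := Filter.Tendsto.sub hf₀ (tendsto_const_nhds (x := f₀) (f := Filter.atTop))
      have h3 := h2.norm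
      simpa using h3
    have hub : ∀ k, |1 - q f₀| ≤
        (2 * Real.sqrt (q f₀) * Real.sqrt C) * ‖G k - f₀‖
          + C * (‖G k - f₀‖ * ‖G k - f₀‖) := by
      intro k
      have h1 := q_cont q qnn hexp (G k) f₀
      rw [hGq k] at h1
      have h2 : Real.sqrt (q (G k - f₀)) ≤ Real.sqrt C * ‖G k - f₀‖ := hsqrtC _
      have h3 : q (G k - f₀) ≤ C * (‖G k - f₀‖ * ‖G k - f₀‖) := by
        have := hqup (G k - f₀)
        nlinarith [this]
      have h4 : (0:ℝ) ≤ Real.sqrt (q f₀) := Real.sqrt_nonneg _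
      calc |1 - q f₀|
          ≤ 2 * Real.sqrt (q f₀) * Real.sqrt (q (G k - f₀)) + q (G k - f₀) := h1
        _ ≤ (2 * Real.sqrt (q f₀) * Real.sqrt C) * ‖G k - f₀‖
              + C * (‖G k - f₀‖ * ‖G k - f₀‖) := by
            have h5 := mul_le_mul_of_nonneg_left h2 (by positivity :
              (0:ℝ) ≤ 2 * Real.sqrt (q f₀))
            rw [← mul_assoc] at h5
            linarith
    have hz : Filter.Tendsto (fun k =>
        (2 * Real.sqrt (q f₀) * Real.sqrt C) * ‖G k - f₀‖
          + C * (‖G k - f₀‖ * ‖G k - f₀‖)) Filter.atTop (nhds 0) := by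
      have h1 := hd.const_mul (2 * Real.sqrt (q f₀) * Real.sqrt C)
      have h2 := (hd.mul hd).const_mul C
      have h3 := h1.add h2
      simpa using h3
    have h0 : |1 - q f₀| ≤ 0 := ge_of_tendsto hz (Filter.Eventually.of_forall hub)
    have := abs_nonpos_iff.1 h0
    linarith [sub_eq_zero.1 this]
  refine ⟨f₀, hf₀K, ?_, ?_⟩
  · intro h0
    rw [h0] at hHf₀
    simp at hHf₀
  · rw [hHf₀, hq₀, Real.sqrt_one]

end Abstract
set_option maxHeartbeats 1000000 in
/-- Let `W` be a matrix weight with `W(ζ) ≥ a² I` a.e. where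
`a > ‖H_Ψ‖_e`, and let `K` be a closed subspace of `H²(ℂ^n)` on which `‖H_Ψ f‖₂ ≤ ‖f‖_W`.
If `sup { ‖H_Ψ f‖₂ : f ∈ K, ‖f‖_W = 1 } = 1`, then some nonzero `f₀ ∈ K` attains
`‖H_Ψ f₀‖₂ = ‖f₀‖_W`. -/
theorem exists_maximizer_weighted_hankel (n : ℕ)
    (Ψ : circ → Matrix (Fin n) (Fin n) ℂ) (hΨ : MemLinf Ψ)
    (M : L2 n →L[ℂ] L2 n) (hM : IsMulOp Ψ M)
    (W : circ → Matrix (Fin n) (Fin n) ℂ) (hWb : MemLinf W)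
    (a : ℝ) (ha : essNorm (Hankel M) < a)
    (hW : ∀ᵐ ζ ∂mu, ∀ ξ : EuclideanSpace ℂ (Fin n),
      a ^ 2 * ‖ξ‖ ^ 2 ≤ (inner ℂ (matCLM (W ζ) ξ) ξ : ℂ).re)
    (K : Submodule ℂ ↥(Hardy n)) (hK : IsClosed (K : Set ↥(Hardy n)))
    (hbound : ∀ f ∈ K, ‖Hankel M f‖ ≤ Real.sqrt (wNormSq W (↑f : L2 n)))
    (hsup : sSup { v : ℝ | ∃ f ∈ K, Real.sqrt (wNormSq W (↑f : L2 n)) = 1 ∧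
        v = ‖Hankel M f‖ } = 1) :
    ∃ f₀ ∈ K, f₀ ≠ 0 ∧ ‖Hankel M f₀‖ = Real.sqrt (wNormSq W (↑f₀ : L2 n)) := by
  have ha0 : 0 < a := lt_of_le_of_lt (essNorm_nonneg _) ha
  obtain ⟨S, hS, hSlt⟩ := exists_compact_approx ha
  obtain ⟨C, hC0, hCle⟩ := wNormSq_le W hWb
  refine abstract_maximizer (Hankel M) S hS (fun f => wNormSq W (↑f : L2 n)) a C
    ha0 hC0 hSlt ?_ ?_ ?_ K hK hbound hsup
  · intro f
    exact wNormSq_ge W hWb a hW (↑f : L2 n)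
  · intro f
    exact hCle (↑f : L2 n)
  · intro f g
    obtain ⟨s, hs⟩ := wNormSq_expand W hWb (↑f : L2 n) (↑g : L2 n)
    refine ⟨s, fun c => ?_⟩
    have hc : ((↑(f + (c:ℂ) • g)) : L2 n) = (↑f : L2 n) + (c:ℂ) • (↑g : L2 n) := by
      rw [Submodule.coe_add, Submodule.coe_smul]
    show wNormSq W (↑(f + (c:ℂ) • g) : L2 n) = _
    rw [hc]
    exact hs c

end MeroIdx
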